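/- Assume p = 2. Let e ≥ 0 be an integer and q = 2^e. Define σ : SL(2,k) → SL(4,k) by σ([[a,b],[c,d]]) = [[1, 0, 0, 0], [a^{q}b^{q}, a^{2q}, b^{2q}, 0], [c^{q}d^{q}, c^{2q}, d^{2q}, 0], [b^{q}c^{q}, a^{q}c^{q}, b^{q}d^{q}, 1]]. Then σ is a group homomorphism; the set of column vectors v ∈ k⁴ with σ(A)·v = v for all A ∈ SL(2,k) is exactly the line k·(0,0,0,1)ᵗ, and the set of row vectors w ∈ k⁴ with w·σ(A) = w for all A ∈ SL(2,k) is exactly the line k·(1,0,0,0). -/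
import Mathlib


open Matrix

/-- The explicit map of form (V)♯ (for `p = 2`). -/
noncomputable def famV (k : Type*) [Field k] (q : ℕ)
    (A : SpecialLinearGroup (Fin 2) k) : Matrix (Fin 4) (Fin 4) k :=
  let a := A.1 0 0
  let b := A.1 0 1
  let c := A.1 1 0
  let d := A.1 1 1
  !![1, 0, 0, 0;
     a ^ q * b ^ q, a ^ (2 * q), b ^ (2 * q), 0;
     c ^ q * d ^ q, c ^ (2 * q), d ^ (2 * q), 0;
     b ^ q * c ^ q, a ^ q * c ^ q, b ^ q * d ^ q, 1]

/-- Auxiliary abstract form of the matrix, in terms of the `q`-th powers of the entries. -/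
def auxM {k : Type*} [Field k] (x y z w : k) : Matrix (Fin 4) (Fin 4) k :=
  !![1, 0, 0, 0;
     x * y, x ^ 2, y ^ 2, 0;
     z * w, z ^ 2, w ^ 2, 0;
     y * z, x * z, y * w, 1]

lemma famV_eq_auxM {k : Type*} [Field k] (q : ℕ)
    (A : SpecialLinearGroup (Fin 2) k) :
    famV k q A = auxM ((A.1 0 0) ^ q) ((A.1 0 1) ^ q) ((A.1 1 0) ^ q) ((A.1 1 1) ^ q) := by
  unfold famV auxM
  rw [show 2 * q = q * 2 by ring]
  simp [pow_mul]

lemma auxM_mul {k : Type*} [Field k] (h0 : (2 : k) = 0)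
    (x1 y1 z1 w1 x2 y2 z2 w2 : k)
    (h1 : x1 * w1 - y1 * z1 = 1) (h2 : x2 * w2 - y2 * z2 = 1) :
    auxM (x1 * x2 + y1 * z2) (x1 * y2 + y1 * w2) (z1 * x2 + w1 * z2) (z1 * y2 + w1 * w2)
      = auxM x1 y1 z1 w1 * auxM x2 y2 z2 w2 := by
  unfold auxM
  ext i j
  fin_cases i <;> fin_cases j <;>
    simp [Matrix.mul_apply, Fin.sum_univ_four] <;> try ring
  · linear_combination (x1 * y1) * h2 + (x1 * y1 * y2 * z2) * h0
  · linear_combination (x1 * y1 * x2 * z2) * h0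
  · linear_combination (x1 * y1 * y2 * w2) * h0
  · linear_combination (z1 * w1) * h2 + (z1 * w1 * y2 * z2) * h0
  · linear_combination (z1 * w1 * x2 * z2) * h0
  · linear_combination (z1 * w1 * y2 * w2) * h0
  · linear_combination (y2 * z2) * h1 + (y1 * z1) * h2 + (y1 * z1 * y2 * z2) * h0
  · linear_combination (x2 * z2) * h1 + (y1 * z1 * x2 * z2) * h0
  · linear_combination (y2 * w2) * h1 + (y1 * z1 * y2 * w2) * h0

lemma auxM_det {k : Type*} [Field k] (h0 : (2 : k) = 0) (x y z w : k)
    (h1 : x * w - y * z = 1) : (auxM x y z w).det = 1 := by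
  unfold auxM
  simp [Matrix.det_succ_row_zero, Fin.sum_univ_succ]
  ring_nf
  linear_combination (x * w + y * z + 1) * h1 + (y * z) * h0

/-- For `p = 2` the explicit map `σ` of form (V)♯ is a homomorphism
into `SL(4,k)`; its fixed column vectors form the line `k·(0,0,0,1)ᵗ` and its fixed row
vectors form the line `k·(1,0,0,0)`. -/
theorem stmt12 {k : Type*} [Field k] [IsAlgClosed k] {p : ℕ} [Fact p.Prime] [CharP k p]
    (hp : p = 2) (e : ℕ) :
    (∀ A : SpecialLinearGroup (Fin 2) k, (famV k (p ^ e) A).det = 1) ∧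
      (∀ A B : SpecialLinearGroup (Fin 2) k,
        famV k (p ^ e) (A * B) = famV k (p ^ e) A * famV k (p ^ e) B) ∧
      (∀ v : Fin 4 → k,
        (∀ A : SpecialLinearGroup (Fin 2) k, famV k (p ^ e) A *ᵥ v = v) ↔
          ∃ c : k, v = c • ![0, 0, 0, 1]) ∧
      ∀ w : Fin 4 → k,
        (∀ A : SpecialLinearGroup (Fin 2) k, w ᵥ* famV k (p ^ e) A = w) ↔
          ∃ c : k, w = c • ![1, 0, 0, 0] := by
  subst hp
  have h0 : (2 : k) = 0 := by exact_mod_cast CharP.cast_eq_zero k 2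
  -- the q-th power determinant relation
  have hdet : ∀ A : SpecialLinearGroup (Fin 2) k,
      (A.1 0 0) ^ 2 ^ e * (A.1 1 1) ^ 2 ^ e
        - (A.1 0 1) ^ 2 ^ e * (A.1 1 0) ^ 2 ^ e = 1 := by
    intro A
    have hA : A.1 0 0 * A.1 1 1 - A.1 0 1 * A.1 1 0 = 1 := by
      have := A.2; rwa [Matrix.det_fin_two] at this
    have := congrArg (· ^ 2 ^ e) hA
    simpa [sub_pow_char_pow, mul_pow] using this
  have hq0 : (0 : k) ^ 2 ^ e = 0 := by
    exact zero_pow (Nat.pos_of_ne_zero (by positivity)).ne'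
  have hq1 : (1 : k) ^ 2 ^ e = 1 := one_pow _
  -- two specific unipotent elements
  have hu : Matrix.det !![(1 : k), 1; 0, 1] = 1 := by simp [Matrix.det_fin_two_of]
  have hl : Matrix.det !![(1 : k), 0; 1, 1] = 1 := by simp [Matrix.det_fin_two_of]
  set u : SpecialLinearGroup (Fin 2) k := ⟨!![1, 1; 0, 1], hu⟩ with hu_def
  set l : SpecialLinearGroup (Fin 2) k := ⟨!![1, 0; 1, 1], hl⟩ with hl_def
  have hfu : famV k (2 ^ e) u = !![1, 0, 0, 0; 1, 1, 1, 0; 0, 0, 1, 0; 0, 0, 1, 1] := by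
    rw [famV_eq_auxM]
    show auxM ((1:k) ^ 2 ^ e) ((1:k) ^ 2 ^ e) ((0:k) ^ 2 ^ e) ((1:k) ^ 2 ^ e) = _
    rw [hq0, hq1]
    unfold auxM
    norm_num
  have hfl : famV k (2 ^ e) l = !![1, 0, 0, 0; 0, 1, 0, 0; 1, 1, 1, 0; 0, 1, 0, 1] := by
    rw [famV_eq_auxM]
    show auxM ((1:k) ^ 2 ^ e) ((0:k) ^ 2 ^ e) ((1:k) ^ 2 ^ e) ((1:k) ^ 2 ^ e) = _
    rw [hq0, hq1]
    unfold auxM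
    norm_num
  refine ⟨?_, ?_, ?_, ?_⟩
  · -- determinant
    intro A
    rw [famV_eq_auxM]
    exact auxM_det h0 _ _ _ _ (hdet A)
  · -- multiplicativity
    intro A B
    have m00 : (A * B).1 0 0 = A.1 0 0 * B.1 0 0 + A.1 0 1 * B.1 1 0 := by
      simp [Matrix.mul_apply, Fin.sum_univ_two]
    have m01 : (A * B).1 0 1 = A.1 0 0 * B.1 0 1 + A.1 0 1 * B.1 1 1 := by
      simp [Matrix.mul_apply, Fin.sum_univ_two]
    have m10 : (A * B).1 1 0 = A.1 1 0 * B.1 0 0 + A.1 1 1 * B.1 1 0 := by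
      simp [Matrix.mul_apply, Fin.sum_univ_two]
    have m11 : (A * B).1 1 1 = A.1 1 0 * B.1 0 1 + A.1 1 1 * B.1 1 1 := by
      simp [Matrix.mul_apply, Fin.sum_univ_two]
    rw [famV_eq_auxM, famV_eq_auxM, famV_eq_auxM, m00, m01, m10, m11,
      add_pow_char_pow, add_pow_char_pow, add_pow_char_pow, add_pow_char_pow]
    simp only [mul_pow]
    exact auxM_mul h0 _ _ _ _ _ _ _ _ (hdet A) (hdet B)
  · -- fixed column vectors
    intro v
    constructor
    · intro h
      have h1 := h u
      have h2 := h l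
      rw [hfu] at h1
      rw [hfl] at h2
      have e1 := congrFun h1 1
      have e3 := congrFun h1 3
      have e2 := congrFun h2 2
      have e3' := congrFun h2 3
      simp [Matrix.mulVec, dotProduct, Fin.sum_univ_four] at e1 e3 e2 e3'
      -- e3 : v 2 + v 3 = v 3 ⇒ v 2 = 0 ; e1 : v 0 + v 1 + v 2 = v 1 ; e2,e3' similar
      refine ⟨v 3, ?_⟩
      funext i
      have hv2 : v 2 = 0 := e3
      have hv1 : v 1 = 0 := e3'
      have hv0 : v 0 = 0 := by linear_combination e2 - e3'
      fin_cases i <;> simp [hv0, hv1, hv2]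
    · rintro ⟨c, rfl⟩
      intro A
      rw [famV_eq_auxM]
      funext i
      fin_cases i <;>
        simp [auxM, Matrix.mulVec, dotProduct, Fin.sum_univ_four]
  · -- fixed row vectors
    intro w
    constructor
    · intro h
      have h1 := h u
      have h2 := h l
      rw [hfu] at h1
      rw [hfl] at h2
      have e0 := congrFun h1 0
      have e2 := congrFun h1 2
      have e0' := congrFun h2 0
      simp [Matrix.vecMul, dotProduct, Fin.sum_univ_four, Matrix.vecHead, Matrix.vecTail] at e0 e2 e0'
      refine ⟨w 0, ?_⟩
      funext i
      have hw1 : w 1 = 0 := by linear_combination e0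
      have hw2 : w 2 = 0 := by linear_combination e0'
      have hw3 : w 3 = 0 := by linear_combination e2 - e0
      fin_cases i <;> simp [hw1, hw2, hw3]
    · rintro ⟨c, rfl⟩
      intro A
      rw [famV_eq_auxM]
      funext j
      fin_cases j <;>
        simp [auxM, Matrix.vecMul, dotProduct, Fin.sum_univ_four]
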